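/- Let ℓ₁,…,ℓₙ and ℓ₁,…,ℓ_{n−1},ℓₙ' be two collections of functions ℝ^d → [0, c] differing only in the last function. Define f₁ = (1/n)·(Σ_{j=1}^{n−1} ℓⱼ + ℓₙ) and f₂ = (1/n)·(Σ_{j=1}^{n−1} ℓⱼ + ℓₙ'). Suppose f₁ satisfies the QG condition with parameter μ > 0. Let w₂* be a global minimizer of f₂ and let w₁* be a global minimizer of f₁ closest to w₂* (in the sense of the QG condition at w₂*). Then ‖w₁* − w₂*‖ ≤ 2·√(c/(μn)). -/

import Mathlib

open Finset

/-- **Minimizers of neighboring empirical risks are close under QG (Lemma on QG bound).**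
For two empirical risks `f₁, f₂` built from `n` losses with values in `[0, c]`, differing
only in the last loss, if `f₁` satisfies the QG condition with parameter `μ > 0`, `w₂*` is
a global minimizer of `f₂`, and `w₁*` is a global minimizer of `f₁` closest to `w₂*` in the
sense of the QG condition at `w₂*`, then `‖w₁* − w₂*‖ ≤ 2√(c/(μn))`. -/
theorem qg_minimizers_close (d n : ℕ) (hn : 1 ≤ n) (c μ : ℝ)
    (g : Fin (n - 1) → EuclideanSpace ℝ (Fin d) → ℝ)
    (ℓn ℓn' : EuclideanSpace ℝ (Fin d) → ℝ)
    (hgnonneg : ∀ j w, 0 ≤ g j w) (hgbdd : ∀ j w, g j w ≤ c)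
    (hnnonneg : ∀ w, 0 ≤ ℓn w) (hnbdd : ∀ w, ℓn w ≤ c)
    (hnnonneg' : ∀ w, 0 ≤ ℓn' w) (hnbdd' : ∀ w, ℓn' w ≤ c)
    (hμ : 0 < μ)
    (f₁ f₂ : EuclideanSpace ℝ (Fin d) → ℝ)
    (hf₁ : f₁ = fun w => (1 / (n : ℝ)) * (∑ j, g j w + ℓn w))
    (hf₂ : f₂ = fun w => (1 / (n : ℝ)) * (∑ j, g j w + ℓn' w))
    (hQG : ∀ x, ∃ xp, (∀ y, f₁ xp ≤ f₁ y) ∧ μ / 2 * ‖x - xp‖ ^ 2 ≤ f₁ x - f₁ xp)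
    (w₂s : EuclideanSpace ℝ (Fin d))
    (hw₂s : ∀ y, f₂ w₂s ≤ f₂ y)
    (w₁s : EuclideanSpace ℝ (Fin d))
    (hw₁s : ∀ y, f₁ w₁s ≤ f₁ y)
    (hQGat : μ / 2 * ‖w₂s - w₁s‖ ^ 2 ≤ f₁ w₂s - f₁ w₁s) :
    ‖w₁s - w₂s‖ ≤ 2 * Real.sqrt (c / (μ * n)) := by
  have hc : 0 ≤ c := le_trans (hnnonneg w₂s) (hnbdd w₂s)
  have hnpos : (0:ℝ) < n := by exact_mod_cast hn
  have hne : (n:ℝ) ≠ 0 := hnpos.ne'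
  have hdiff : ∀ w, |f₁ w - f₂ w| ≤ c / n := by
    intro w
    have h1 := hnnonneg w
    have h2 := hnbdd w
    have h3 := hnnonneg' w
    have h4 := hnbdd' w
    rw [hf₁, hf₂]
    simp only []
    have he : 1/(n:ℝ) * (∑ j, g j w + ℓn w) - 1/(n:ℝ) * (∑ j, g j w + ℓn' w)
        = (ℓn w - ℓn' w)/n := by field_simp; ring
    rw [he, abs_div, abs_of_pos hnpos]
    gcongr
    rw [abs_le]; constructor <;> linarith
  have key : μ / 2 * ‖w₂s - w₁s‖ ^ 2 ≤ 2 * (c / n) := by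
    have h1 := hdiff w₂s
    have h2 := hdiff w₁s
    have h3 := hw₂s w₁s
    rw [abs_le] at h1 h2
    linarith [hQGat]
  have hsq : ‖w₁s - w₂s‖ ^ 2 ≤ 4 * (c / (μ * n)) := by
    rw [norm_sub_rev]
    have e1 : c/(μ*n) * (μ*n) = c := div_mul_cancel₀ _ (by positivity)
    have e2 : c/n * n = c := div_mul_cancel₀ _ hne
    nlinarith [key, mul_pos hμ hnpos]
  have hs := Real.sq_sqrt (show (0:ℝ) ≤ c / (μ * n) by positivity)
  nlinarith [norm_nonneg (w₁s - w₂s), Real.sqrt_nonneg (c / (μ * n)), hsq, hs]
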